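/- Let A: S^n → R^m be a linear map. Then null(A) ∩ S^n_+ = {0} if and only if range(A*) ∩ S^n_{++} ≠ ∅, where A* is the adjoint of A and S^n_{++} denotes the positive definite matrices. -/

import Mathlib

open Matrix

open scoped MatrixOrder in
lemma psd_trace_zero {k : ℕ} {M : Matrix (Fin k) (Fin k) ℝ} (hM : M.PosSemidef)
    (h : M.trace = 0) : M = 0 := by
  obtain ⟨B, rfl⟩ := CStarAlgebra.nonneg_iff_eq_star_mul_self.mp hM.nonneg
  have hB : B = 0 := by
    have h' : ∑ j, ∑ i, B i j * B i j = 0 := by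
      simpa [Matrix.trace, Matrix.diag, Matrix.mul_apply, Matrix.conjTranspose_apply,
        mul_comm] using h
    ext i j
    have h1 := (Finset.sum_eq_zero_iff_of_nonneg (fun j _ =>
      Finset.sum_nonneg fun i _ => mul_self_nonneg (B i j))).mp h' j (Finset.mem_univ j)
    have h2 := (Finset.sum_eq_zero_iff_of_nonneg (fun i _ =>
      mul_self_nonneg (B i j))).mp h1 i (Finset.mem_univ i)
    simpa [mul_self_eq_zero] using h2
  simp [hB]

open scoped MatrixOrder in
lemma pd_psd_trace_zero {k : ℕ} {A X : Matrix (Fin k) (Fin k) ℝ} (hA : A.PosDef)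
    (hX : X.PosSemidef) (h : (A * X).trace = 0) : X = 0 := by
  set B := CFC.sqrt X with hBdef
  have hBpsd := Matrix.nonneg_iff_posSemidef.mp (CFC.sqrt_nonneg X)
  have hBB : B * B = X := CFC.sqrt_mul_sqrt_self X hX.nonneg
  have hBH : Bᴴ = B := hBpsd.1
  have hC : (B * A * B).PosSemidef := by
    have := (hA.posSemidef).conjTranspose_mul_mul_same B
    rwa [hBH] at this
  have hBT : Bᵀ = B := by
    ext i j
    simpa [Matrix.conjTranspose_apply] using congrFun (congrFun hBH i) j
  have htr : (B * A * B).trace = 0 := by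
    rw [← hBB, ← mul_assoc] at h
    rw [mul_assoc, trace_mul_comm]
    exact h
  have hC0 : B * A * B = 0 := psd_trace_zero hC htr
  have hBv : ∀ v : Fin k → ℝ, B *ᵥ v = 0 := by
    intro v
    by_contra hv
    have hpos := hA.dotProduct_mulVec_pos hv
    have : star v ⬝ᵥ ((B * A * B) *ᵥ v) = star (B *ᵥ v) ⬝ᵥ (A *ᵥ (B *ᵥ v)) := by
      simp only [star_trivial, ← mulVec_mulVec]
      rw [dotProduct_mulVec, ← mulVec_transpose, hBT]
    rw [hC0] at this
    simp only [zero_mulVec, dotProduct_zero] at this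
    rw [← this] at hpos
    simp at hpos
  have hB0 : B = 0 := by
    ext i j
    have := congrFun (hBv (Pi.single j 1)) i
    simpa [mulVec_single] using this
  rw [← hBB, hB0, mul_zero]

lemma quasiPD_isOpen {k : ℕ} :
    IsOpen {M : Matrix (Fin k) (Fin k) ℝ | ∀ v : Fin k → ℝ, v ≠ 0 → 0 < v ⬝ᵥ M *ᵥ v} := by
  set K : Set (Fin k → ℝ) := Metric.sphere (0 : Fin k → ℝ) 1 with hK
  haveI : CompactSpace K := isCompact_iff_compactSpace.mp (isCompact_sphere _ _)
  have hg : Continuous fun p : K × Matrix (Fin k) (Fin k) ℝ =>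
      (p.1 : Fin k → ℝ) ⬝ᵥ p.2 *ᵥ (p.1 : Fin k → ℝ) := by
    simp only [dotProduct, mulVec]
    refine continuous_finset_sum _ fun i _ => Continuous.mul ?_ (continuous_finset_sum _
      fun j _ => Continuous.mul ?_ ?_)
    · exact (continuous_apply i).comp (continuous_subtype_val.comp continuous_fst)
    · exact ((continuous_apply j).comp ((continuous_apply i).comp continuous_snd))
    · exact (continuous_apply j).comp (continuous_subtype_val.comp continuous_fst)
  have hclosed : IsClosed (Prod.snd '' {p : K × Matrix (Fin k) (Fin k) ℝ |
      (p.1 : Fin k → ℝ) ⬝ᵥ p.2 *ᵥ (p.1 : Fin k → ℝ) ≤ 0}) :=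
    isClosedMap_snd_of_compactSpace _ (isClosed_le hg continuous_const)
  have hset : {M : Matrix (Fin k) (Fin k) ℝ | ∀ v : Fin k → ℝ, v ≠ 0 → 0 < v ⬝ᵥ M *ᵥ v} =
      (Prod.snd '' {p : K × Matrix (Fin k) (Fin k) ℝ |
      (p.1 : Fin k → ℝ) ⬝ᵥ p.2 *ᵥ (p.1 : Fin k → ℝ) ≤ 0})ᶜ := by
    ext M
    simp only [Set.mem_setOf_eq, Set.mem_compl_iff]
    constructor
    · rintro h ⟨p, hp, rfl⟩
      have hv : (p.1 : Fin k → ℝ) ≠ 0 := by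
        have := p.1.2
        simp only [hK, Metric.mem_sphere, dist_zero_right] at this
        intro h0
        rw [h0] at this
        simp at this
      exact absurd hp (not_le.mpr (h _ hv))
    · intro h v hv
      by_contra hle
      push_neg at hle
      set u : Fin k → ℝ := ‖v‖⁻¹ • v with hu
      have hnv : ‖v‖ ≠ 0 := norm_ne_zero_iff.mpr hv
      have huK : u ∈ K := by
        simp only [hK, Metric.mem_sphere, dist_zero_right, hu, norm_smul, norm_inv, norm_norm]
        field_simp
      have hq : u ⬝ᵥ M *ᵥ u ≤ 0 := by
        rw [hu, smul_dotProduct, mulVec_smul, dotProduct_smul]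
        have h0 : (0:ℝ) ≤ ‖v‖⁻¹ := inv_nonneg.mpr (norm_nonneg v)
        exact smul_nonpos_of_nonneg_of_nonpos h0
          (smul_nonpos_of_nonneg_of_nonpos h0 hle)
      exact h ⟨(⟨u, huK⟩, M), hq, rfl⟩
  rw [hset]
  exact hclosed.isOpen_compl

theorem stmt4 {n m : ℕ} (S : Fin m → Matrix (Fin n) (Fin n) ℝ)
    (hS : ∀ i, (S i).IsSymm) :
    ({X : Matrix (Fin n) (Fin n) ℝ | (∀ i, (S i * X).trace = 0) ∧ X.PosSemidef} = {0}) ↔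
      ∃ y : Fin m → ℝ, (∑ i, y i • S i).PosDef := by
  have happ : ∀ k (i j : Fin n), S k j i = S k i j := fun k i j =>
    congrFun (congrFun (hS k) i) j
  constructor
  · intro hset
    by_contra hy
    push_neg at hy
    set s : Set (Matrix (Fin n) (Fin n) ℝ) :=
      {M | ∀ v : Fin n → ℝ, v ≠ 0 → 0 < v ⬝ᵥ M *ᵥ v} with hs
    have hconv : Convex ℝ s := by
      intro M hM N hN a b ha hb hab
      intro v hv
      have hM' := hM v hv
      have hN' := hN v hv
      simp only [add_mulVec, smul_mulVec, dotProduct_add, dotProduct_smul, smul_eq_mul]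
      rcases ha.eq_or_lt with rfl | ha'
      · simp only [zero_add] at hab
        simp [hab, hN']
      · have : 0 ≤ b * (v ⬝ᵥ N *ᵥ v) := mul_nonneg hb hN'.le
        nlinarith
    have hdisj : Disjoint s (Submodule.span ℝ (Set.range S) : Set (Matrix (Fin n) (Fin n) ℝ)) := by
      rw [Set.disjoint_left]
      intro M hMs hMt
      obtain ⟨y, rfl⟩ := Submodule.mem_span_range_iff_exists_fun ℝ |>.mp hMt
      refine hy y (PosDef.of_dotProduct_mulVec_pos ?_ ?_)
      · ext i j
        simp only [conjTranspose_apply, Matrix.sum_apply, Matrix.smul_apply, smul_eq_mul,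
          star_trivial]
        exact Finset.sum_congr rfl fun k _ => by rw [happ k j i]
      · intro x hx
        simpa using hMs x hx
    obtain ⟨f, u, hfs, hft⟩ := geometric_hahn_banach_open hconv quasiPD_isOpen
      (Submodule.span ℝ (Set.range S)).convex hdisj
    have hft0 : ∀ b ∈ Submodule.span ℝ (Set.range S), f b = 0 := by
      intro b hb
      by_contra hfb
      have h1 : ∀ c : ℝ, u ≤ c * f b := by
        intro c
        have := hft (c • b) (Submodule.smul_mem _ c hb)
        simpa using this
      have h2 := h1 ((u - 1) / f b)
      rw [div_mul_cancel₀ _ hfb] at h2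
      linarith
    have hu0 : u ≤ 0 := by simpa using hft 0 (Submodule.zero_mem _)
    have hI : (1 : Matrix (Fin n) (Fin n) ℝ) ∈ s := by
      intro v hv
      rw [one_mulVec]
      refine lt_of_le_of_ne (Finset.sum_nonneg fun i _ => mul_self_nonneg _) ?_
      intro h0
      exact hv (dotProduct_self_eq_zero.mp h0.symm)
    have hfI : f 1 < 0 := lt_of_lt_of_le (hfs 1 hI) hu0
    have hfpsd : ∀ X : Matrix (Fin n) (Fin n) ℝ, X.PosSemidef → f X ≤ 0 := by
      intro X hX
      by_contra hpos
      push_neg at hpos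
      set ε : ℝ := f X / (-(f 1)) with hε
      have hεpos : 0 < ε := div_pos hpos (by linarith)
      have hmem : X + ε • (1 : Matrix (Fin n) (Fin n) ℝ) ∈ s := by
        intro v hv
        have h1 : 0 ≤ v ⬝ᵥ X *ᵥ v := by simpa using hX.dotProduct_mulVec_nonneg v
        have h2 : 0 < v ⬝ᵥ v := by
          refine lt_of_le_of_ne (Finset.sum_nonneg fun i _ => mul_self_nonneg _) ?_
          intro h0
          exact hv (dotProduct_self_eq_zero.mp h0.symm)
        simp only [add_mulVec, smul_mulVec, one_mulVec, dotProduct_add, dotProduct_smul,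
          smul_eq_mul]
        nlinarith
      have h3 := hfs _ hmem
      rw [map_add, f.map_smul] at h3
      have h4 : ε * (-(f 1)) = f X := div_mul_cancel₀ _ (by linarith)
      simp only [smul_eq_mul] at h3
      linarith
    set Y : Fin n → Fin n → ℝ := fun i j => f (single i j 1) with hY
    have hkey : ∀ M : Matrix (Fin n) (Fin n) ℝ, f M = ∑ i, ∑ j, M i j * Y i j := by
      intro M
      conv_lhs => rw [matrix_eq_sum_single M]
      rw [map_sum]
      refine Finset.sum_congr rfl fun i _ => ?_
      rw [map_sum]
      refine Finset.sum_congr rfl fun j _ => ?_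
      have h5 : single i j (M i j) = (M i j) • single i j 1 := by
        rw [smul_single, smul_eq_mul, mul_one]
      rw [h5, f.map_smul, smul_eq_mul]
    set X : Matrix (Fin n) (Fin n) ℝ := Matrix.of fun i j => -((Y i j + Y j i)/2) with hX
    have hswap : ∀ C : Matrix (Fin n) (Fin n) ℝ, (∀ i j, C j i = C i j) →
        ∑ i, ∑ j, C i j * Y j i = ∑ i, ∑ j, C i j * Y i j := by
      intro C hC
      rw [Finset.sum_comm]
      exact Finset.sum_congr rfl fun i _ => Finset.sum_congr rfl fun j _ => by rw [hC i j]
    have htrace : ∀ k, (S k * X).trace = 0 := by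
      intro k
      have hfS : f (S k) = 0 := hft0 (S k) (Submodule.subset_span ⟨k, rfl⟩)
      have hA1 : ∑ i, ∑ j, S k i j * Y i j = 0 := by rw [← hkey]; exact hfS
      have hA2 : ∑ i, ∑ j, S k i j * Y j i = 0 := by
        rw [hswap (S k) (fun i j => happ k i j)]; exact hA1
      have expand : ∀ i j : Fin n, S k i j * X j i =
          -(1/2) * (S k i j * Y j i) + -(1/2) * (S k i j * Y i j) := by
        intro i j
        simp only [hX, Matrix.of_apply]
        ring
      have : (S k * X).trace = ∑ i, ∑ j, S k i j * X j i := by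
        simp [Matrix.trace, Matrix.diag, Matrix.mul_apply]
      rw [this]
      simp_rw [expand]
      simp only [Finset.sum_add_distrib, ← Finset.mul_sum]
      rw [hA1, hA2]
      ring
    have hXpsd : X.PosSemidef := by
      refine PosSemidef.of_dotProduct_mulVec_nonneg ?_ ?_
      · ext i j
        simp only [conjTranspose_apply, hX, Matrix.of_apply, star_trivial]
        ring
      · intro x
        have houterpsd : (vecMulVec x x).PosSemidef := by
          refine PosSemidef.of_dotProduct_mulVec_nonneg ?_ ?_
          · ext i j
            simp only [conjTranspose_apply, vecMulVec_apply, star_trivial]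
            ring
          · intro w
            have h2 : star w ⬝ᵥ (vecMulVec x x *ᵥ w) = (∑ i, w i * x i) * (∑ j, w j * x j) := by
              rw [Finset.sum_mul_sum]
              simp only [star_trivial, dotProduct, mulVec, vecMulVec_apply, Finset.mul_sum]
              exact Finset.sum_congr rfl fun i _ => Finset.sum_congr rfl fun j _ => by ring
            rw [h2]
            exact mul_self_nonneg _
        have hfo : f (vecMulVec x x) ≤ 0 := hfpsd _ houterpsd
        have hfo' : f (vecMulVec x x) = ∑ i, ∑ j, (x i * x j) * Y i j := by
          rw [hkey]
          exact Finset.sum_congr rfl fun i _ => Finset.sum_congr rfl fun j _ => by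
            rw [vecMulVec_apply]
        have hB2 : ∑ i, ∑ j, (x i * x j) * Y j i = ∑ i, ∑ j, (x i * x j) * Y i j := by
          have := hswap (Matrix.of fun i j => x i * x j) (fun i j => by
            simp only [Matrix.of_apply]; ring)
          simpa only [Matrix.of_apply] using this
        have expand : ∀ i j : Fin n, x i * (X i j * x j) =
            -(1/2) * ((x i * x j) * Y i j) + -(1/2) * ((x i * x j) * Y j i) := by
          intro i j
          simp only [hX, Matrix.of_apply]
          ring
        have hval : star x ⬝ᵥ X *ᵥ x = ∑ i, ∑ j, x i * (X i j * x j) := by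
          simp [dotProduct, mulVec, Finset.mul_sum]
        rw [hval]
        simp_rw [expand]
        simp only [Finset.sum_add_distrib, ← Finset.mul_sum]
        rw [hB2, ← hfo']
        nlinarith
    have htrX : X.trace = -(f 1) := by
      have hf1 : f 1 = ∑ i, Y i i := by
        rw [hkey]
        simp [Matrix.one_apply, ite_mul]
      rw [hf1]
      simp only [Matrix.trace, Matrix.diag, hX, Matrix.of_apply]
      rw [← Finset.sum_neg_distrib]
      exact Finset.sum_congr rfl fun i _ => by ring
    have hXmem : X ∈ ({0} : Set (Matrix (Fin n) (Fin n) ℝ)) := by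
      rw [← hset]
      exact ⟨htrace, hXpsd⟩
    rw [Set.mem_singleton_iff] at hXmem
    rw [hXmem] at htrX
    simp only [trace_zero] at htrX
    linarith
  · rintro ⟨y, hy⟩
    refine Set.eq_singleton_iff_unique_mem.mpr ⟨⟨fun i => by simp, Matrix.PosSemidef.zero⟩, ?_⟩
    rintro X ⟨htr, hpsd⟩
    have h0 : ((∑ i, y i • S i) * X).trace = 0 := by
      rw [Finset.sum_mul]
      simp only [smul_mul_assoc]
      rw [trace_sum]
      simp [trace_smul, htr]
    exact pd_psd_trace_zero hy hpsd h0
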